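/- In the complete bipartite graph K_{m,n} (m ≥ n ≥ 2, m+n ≥ 9) with all edges colored 0, no recoloring of at most two edges with a single new color makes the graph properly connected. -/

import Mathlib

open SimpleGraph

/-- A walk is properly colored: no two consecutive edges share a color. -/
def ProperWalk {V : Type*} {G : SimpleGraph V} (c : Sym2 V → ℕ) {u v : V} (p : G.Walk u v) : Prop :=
  (p.edges.map c).Chain' (· ≠ ·)

/-- An edge-colored graph is properly connected. -/
def ProperlyConnected {V : Type*} (G : SimpleGraph V) (c : Sym2 V → ℕ) : Prop :=
  ∀ u v : V, u ≠ v → ∃ p : G.Walk u v, p.IsPath ∧ ProperWalk c p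

/-- Number of edges recolored away from the base color 0. -/
noncomputable def numRecolored {V : Type*} (G : SimpleGraph V) (c : Sym2 V → ℕ) : ℕ :=
  {e | e ∈ G.edgeSet ∧ c e ≠ 0}.ncard

/-- Number of new colors used. -/
noncomputable def numNewColors {V : Type*} (G : SimpleGraph V) (c : Sym2 V → ℕ) : ℕ :=
  (c '' {e | e ∈ G.edgeSet ∧ c e ≠ 0}).ncard

/-- Optimal proper connection number: minimum of p + q. -/
noncomputable def pcOpt {V : Type*} (G : SimpleGraph V) : ℕ :=
  sInf { n | ∃ c : Sym2 V → ℕ, ProperlyConnected G c ∧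
    n = numRecolored G c + numNewColors G c }

lemma aux10 (m n : ℕ) (c : Sym2 (Fin m ⊕ Fin n) → ℕ) (hval : ∀ e, c e = 0 ∨ c e = 1)
    (v : Fin m) (hv : ∀ b : Fin n, c s(Sum.inl v, Sum.inr b) = 0)
    (x z : Fin m ⊕ Fin n) (p : (completeBipartiteGraph (Fin m) (Fin n)).Walk x z)
    (hz : z = Sum.inl v) (hp : ProperWalk c p) :
    (∀ a, x = Sum.inl a → ∀ e ∈ p.edges.head?, c e = 1) ∧
    (∀ b, x = Sum.inr b → ∀ e ∈ p.edges.head?, c e = 0) := by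
  induction p with
  | nil => simp
  | @cons x y _ h q ih =>
    rw [ProperWalk, Walk.edges_cons, List.map_cons, List.Chain', List.isChain_cons] at hp
    obtain ⟨hhead, hq⟩ := hp
    have ih' := ih hz hq
    constructor
    · rintro a rfl e he
      -- y must be inr b
      obtain ⟨b, rfl⟩ : ∃ b, y = Sum.inr b := by
        cases y with
        | inl b => simp [completeBipartiteGraph] at h
        | inr b => exact ⟨b, rfl⟩
      simp only [Walk.edges_cons, List.head?_cons, Option.mem_def, Option.some.injEq] at he
      subst he
      -- q starts at inr b, so its first color is 0, and q is nonempty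
      have hqnil : q.edges ≠ [] := by
        intro hnil
        have hl : q.length = 0 := by
          have := congrArg List.length hnil
          simpa [Walk.length_edges] using this
        have := Walk.eq_of_length_eq_zero hl
        simp [hz] at this
      obtain ⟨e0, l, hel⟩ := List.exists_cons_of_ne_nil hqnil
      have h0 : c e0 = 0 := by
        have := (ih'.2 b rfl) e0
        rw [hel] at this
        exact this rfl
      have hne : c s(Sum.inl a, Sum.inr b) ≠ c e0 := by
        have := hhead (c e0)
        rw [hel] at this
        exact this rfl
      rcases hval s(Sum.inl a, Sum.inr b) with h1 | h1
      · exact absurd (h1.trans h0.symm) hne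
      · exact h1
    · rintro b rfl e he
      obtain ⟨a, rfl⟩ : ∃ a, y = Sum.inl a := by
        cases y with
        | inl a => exact ⟨a, rfl⟩
        | inr a => simp [completeBipartiteGraph] at h
      simp only [Walk.edges_cons, List.head?_cons, Option.mem_def, Option.some.injEq] at he
      subst he
      rcases hq' : q.edges with _ | ⟨e0, l⟩
      · -- q is nil, so a = v
        have hl : q.length = 0 := by
          have := congrArg List.length hq'
          simpa [Walk.length_edges] using this
        have hav := Walk.eq_of_length_eq_zero hl
        rw [hz] at hav
        have : a = v := by injection hav
        subst this
        rw [Sym2.eq_swap]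
        exact hv b
      · have h1 : c e0 = 1 := by
          have := (ih'.1 a rfl) e0
          rw [hq'] at this
          exact this rfl
        have hne : c s(Sum.inr b, Sum.inl a) ≠ c e0 := by
          have := hhead (c e0)
          rw [hq'] at this
          exact this rfl
        rcases hval s(Sum.inr b, Sum.inl a) with h0 | h0
        · exact h0
        · exact absurd (h0.trans h1.symm) (by rw [h1] at hne ⊢; exact hne)

theorem stmt10 (m n : ℕ) (hmn : n ≤ m) (hn : 2 ≤ n) (h9 : 9 ≤ m + n)
    (c : Sym2 (Fin m ⊕ Fin n) → ℕ) (hval : ∀ e, c e = 0 ∨ c e = 1)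
    (hcount :
      {e | e ∈ (completeBipartiteGraph (Fin m) (Fin n)).edgeSet ∧ c e = 1}.ncard ≤ 2) :
    ¬ ProperlyConnected (completeBipartiteGraph (Fin m) (Fin n)) c := by
  intro hPC
  have hm5 : 5 ≤ m := by omega
  set S := {e | e ∈ (completeBipartiteGraph (Fin m) (Fin n)).edgeSet ∧ c e = 1} with hS
  set B := {a : Fin m | ¬ ∀ b : Fin n, c s(Sum.inl a, Sum.inr b) = 0} with hB
  -- each bad vertex has a witness edge
  have hwit : ∀ a ∈ B, ∃ b : Fin n, c s(Sum.inl a, Sum.inr b) = 1 := by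
    intro a ha
    rw [hB, Set.mem_setOf_eq] at ha
    push_neg at ha
    obtain ⟨b, hb⟩ := ha
    rcases hval s(Sum.inl a, Sum.inr b) with h0 | h1
    · exact absurd h0 hb
    · exact ⟨b, h1⟩
  classical
  let f : Fin m → Sym2 (Fin m ⊕ Fin n) := fun a =>
    if h : ∃ b : Fin n, c s(Sum.inl a, Sum.inr b) = 1 then s(Sum.inl a, Sum.inr h.choose)
    else s(Sum.inl a, Sum.inl a)
  have hBcard : B.ncard ≤ 2 := by
    refine le_trans (Set.ncard_le_ncard_of_injOn f ?_ ?_ (Set.toFinite S)) hcount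
    · intro a ha
      have h := hwit a ha
      simp only [f, dif_pos h]
      refine ⟨?_, h.choose_spec⟩
      simp [completeBipartiteGraph]
    · intro a ha a' ha' hfa
      have h := hwit a ha
      have h' := hwit a' ha'
      simp only [f, dif_pos h, dif_pos h'] at hfa
      rw [Sym2.eq_iff] at hfa
      rcases hfa with ⟨h1, _⟩ | ⟨h1, _⟩
      · injection h1
      · exact absurd h1 (by simp)
  -- find two good vertices
  have hcompl : 2 ≤ Bᶜ.ncard := by
    have := Set.ncard_add_ncard_compl B
    have hcardfin : Nat.card (Fin m) = m := by simp
    omega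
  have h1lt : 1 < Bᶜ.ncard := hcompl
  obtain ⟨u, v, hu, hv, huv⟩ := (Set.one_lt_ncard_iff (Set.toFinite _)).mp h1lt
  rw [Set.mem_compl_iff, hB, Set.mem_setOf_eq, not_not] at hu hv
  obtain ⟨p, hpath, hprop⟩ := hPC (Sum.inl u) (Sum.inl v) (by simp [huv])
  have key := aux10 m n c hval v hv (Sum.inl u) (Sum.inl v) p rfl hprop
  cases p with
  | nil => simp at huv
  | @cons _ y _ h q =>
    obtain ⟨b, rfl⟩ : ∃ b, y = Sum.inr b := by
      cases y with
      | inl b => simp [completeBipartiteGraph] at h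
      | inr b => exact ⟨b, rfl⟩
    have := key.1 u rfl s(Sum.inl u, Sum.inr b) (by simp)
    rw [hu b] at this
    exact absurd this (by simp)
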